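/- For every μ̄ ∈ (0,1) and every K > 0 there exist a natural number S ≥ 1, group labels a : Fin S → ℝ with a i ∈ {0,1} for all i, ∑_i a i ≥ 1 and ∑_i (1 − a i) ≥ 1, and predictions p, p̂ : Fin S → ℝ with 0 < p i ≤ 1 and 0 < p̂ i ≤ 1 for all i and |p i − p̂ i| ≤ μ̄ for all i, such that |r(p, a) − r(p̂, a)| ≥ K, where r(p, a) = ((∑_i a i · p i)/(∑_i a i)) / ((∑_i (1 − a i) · p i)/(∑_i (1 − a i))) is the disparate-impact group ratio. In particular, the disparate-impact ratio is not uniformly approximable: pointwise μ̄-close classifiers can have arbitrarily different disparate-impact ratios. -/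

import Mathlib

/-- The disparate-impact group ratio of predictions `p` with respect to the
binary group labels `a`: the mean prediction on the group `{i | a i = 1}`
divided by the mean prediction on the group `{i | a i = 0}`. -/
noncomputable def diRatio {S : ℕ} (p a : Fin S → ℝ) : ℝ :=
  ((∑ i, a i * p i) / (∑ i, a i)) / ((∑ i, (1 - a i) * p i) / (∑ i, (1 - a i)))

theorem di_not_uniformly_approximable (μbar : ℝ) (hμ0 : 0 < μbar) (hμ1 : μbar < 1)
    (K : ℝ) (hK : 0 < K) :
    ∃ (S : ℕ), 1 ≤ S ∧
      ∃ (a p phat : Fin S → ℝ),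
        (∀ i, a i = 0 ∨ a i = 1) ∧
        1 ≤ ∑ i, a i ∧ 1 ≤ ∑ i, (1 - a i) ∧
        (∀ i, 0 < p i ∧ p i ≤ 1) ∧
        (∀ i, 0 < phat i ∧ phat i ≤ 1) ∧
        (∀ i, |p i - phat i| ≤ μbar) ∧
        K ≤ |diRatio p a - diRatio phat a| := by
  set ε : ℝ := min (1 - μbar) (μbar / K) with hε
  have hε0 : 0 < ε := lt_min (by linarith) (div_pos hμ0 hK)
  have hε1 : ε ≤ 1 - μbar := min_le_left _ _
  have hε2 : ε ≤ μbar / K := min_le_right _ _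
  refine ⟨2, by norm_num, (fun i => if i = 0 then 1 else 0),
    (fun i => if i = 0 then 1 else ε), (fun i => if i = 0 then 1 else ε + μbar),
    ?_, ?_, ?_, ?_, ?_, ?_, ?_⟩
  · intro i; by_cases h : i = 0 <;> simp [h]
  · simp [Fin.sum_univ_two]
  · simp [Fin.sum_univ_two]; norm_num
  · intro i; by_cases h : i = 0 <;> simp [h] <;> constructor <;> linarith
  · intro i; by_cases h : i = 0 <;> simp [h] <;> constructor <;> linarith
  · intro i; by_cases h : i = 0
    · simp [h]; linarith
    · simp only [if_neg h]
      rw [show ε - (ε + μbar) = -μbar by ring, abs_neg, abs_of_pos hμ0]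
  · have h1 : diRatio (fun i : Fin 2 => if i = 0 then 1 else ε)
        (fun i => if i = 0 then 1 else 0) = 1 / ε := by
      simp [diRatio, Fin.sum_univ_two]; norm_num
    have h2 : diRatio (fun i : Fin 2 => if i = 0 then 1 else ε + μbar)
        (fun i => if i = 0 then 1 else 0) = 1 / (ε + μbar) := by
      simp [diRatio, Fin.sum_univ_two]; norm_num
    rw [h1, h2]
    have hεμ : 0 < ε + μbar := by linarith
    have hεμ1 : ε + μbar ≤ 1 := by linarith
    have key : 1 / ε - 1 / (ε + μbar) = μbar / (ε * (ε + μbar)) := by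
      field_simp
      ring
    rw [show (1:ℝ)/ε - 1/(ε+μbar) = μbar / (ε * (ε + μbar)) from key,
      abs_of_nonneg (by positivity)]
    have h3 : ε * (ε + μbar) ≤ ε * 1 := by
      exact mul_le_mul_of_nonneg_left hεμ1 hε0.le
    have h4 : μbar / ε ≤ μbar / (ε * (ε + μbar)) := by
      apply div_le_div_of_nonneg_left hμ0.le (by positivity) (by linarith)
    have h5 : K ≤ μbar / ε := by
      rw [le_div_iff₀ hε0]
      calc K * ε ≤ K * (μbar / K) := by nlinarith
        _ = μbar := by field_simp
    linarith
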